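/- Let L be the combinatorial graph Laplacian of a connected weighted graph on vertex set V, let V_1 ⊊ V with V_1 and V_1^c nonempty and |V_1| ≥ 2, and let W^red be the reduced weights given by W^red_{ij} = −K(L,V_1)_{ij} for i ≠ j. Then the reduced weighted graph on V_1 is connected: any two vertices of V_1 are joined by a path of edges with positive reduced weight (equivalently, the second-smallest eigenvalue of K(L,V_1) is strictly positive). -/

import Mathlib

open Matrix

noncomputable def deg {n : Type*} [Fintype n] (W : Matrix n n ℝ) (i : n) : ℝ := ∑ j, W i j

noncomputable def lap {n : Type*} [Fintype n] [DecidableEq n] (W : Matrix n n ℝ) :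
    Matrix n n ℝ :=
  Matrix.diagonal (deg W) - W

def IsConn {n : Type*} (W : Matrix n n ℝ) : Prop :=
  ∀ i j : n, Relation.ReflTransGen (fun a b => 0 < W a b) i j

def IsBipartiteWith {n : Type*} (W : Matrix n n ℝ) (V1 : Set n) : Prop :=
  ∀ i j, 0 < W i j → (i ∈ V1 ↔ j ∉ V1)

open Classical in
noncomputable def sortedEigs {n : Type*} [Fintype n] [DecidableEq n] (A : Matrix n n ℝ) :
    Fin (Fintype.card n) → ℝ :=
  if h : A.IsHermitian then
    (fun i => h.eigenvalues ((Fintype.equivFin n).symm i)) ∘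
      ⇑(Tuple.sort fun i => h.eigenvalues ((Fintype.equivFin n).symm i))
  else 0

noncomputable def kron {n : Type*} [Fintype n] [DecidableEq n] (L : Matrix n n ℝ)
    (V1 : Finset n) : Matrix ↥V1 ↥V1 ℝ :=
  L.submatrix (Subtype.val : ↥V1 → n) (Subtype.val : ↥V1 → n) -
    L.submatrix (Subtype.val : ↥V1 → n) (Subtype.val : ↥(V1ᶜ) → n) *
      (L.submatrix (Subtype.val : ↥(V1ᶜ) → n) (Subtype.val : ↥(V1ᶜ) → n))⁻¹ *
      L.submatrix (Subtype.val : ↥(V1ᶜ) → n) (Subtype.val : ↥V1 → n)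

noncomputable def wred {m : Type*} [DecidableEq m] (K : Matrix m m ℝ) : Matrix m m ℝ :=
  Matrix.of fun i j => if i = j then 0 else -K i j

section helpers
variable {N : ℕ}

lemma lap_apply_ne (W : Matrix (Fin N) (Fin N) ℝ) {i j : Fin N} (h : i ≠ j) :
    lap W i j = -W i j := by
  simp [lap, Matrix.diagonal_apply_ne _ h]

lemma lap_mulVec (W : Matrix (Fin N) (Fin N) ℝ) (y : Fin N → ℝ) (i : Fin N) :
    (lap W *ᵥ y) i = deg W i * y i - ∑ j, W i j * y j := by
  simp [lap, mulVec, dotProduct, sub_mul, Finset.sum_sub_distrib, diagonal, deg,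
    Finset.sum_ite_eq, ite_mul]

lemma quad_eq (W : Matrix (Fin N) (Fin N) ℝ) (hsymm : W.IsSymm) (y : Fin N → ℝ) :
    2 * (y ⬝ᵥ (lap W *ᵥ y)) = ∑ i, ∑ j, W i j * (y i - y j) ^ 2 := by
  have hdeg : ∀ j, (∑ i, W i j) = deg W j := by
    intro j; unfold deg; exact Finset.sum_congr rfl fun i _ => hsymm.apply j i ▸ rfl
  have expand : ∀ i j : Fin N, W i j * (y i - y j) ^ 2
      = W i j * (y i)^2 + W i j * (y j)^2 - 2 * (y i * (W i j * y j)) := by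
    intro i j; ring
  calc 2 * (y ⬝ᵥ (lap W *ᵥ y))
      = 2 * ∑ i, (deg W i * (y i)^2 - ∑ j, y i * (W i j * y j)) := by
        unfold dotProduct
        congr 1
        refine Finset.sum_congr rfl fun i _ => ?_
        rw [lap_mulVec, mul_sub, Finset.mul_sum]
        ring_nf
    _ = ∑ i, ∑ j, W i j * (y i - y j) ^ 2 := by
        have h1 : ∀ i : Fin N, ∑ j, W i j * (y i - y j) ^ 2
            = deg W i * (y i)^2 + (∑ j, W i j * (y j)^2) - 2 * ∑ j, y i * (W i j * y j) := by
          intro i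
          simp only [expand]
          rw [Finset.sum_sub_distrib, Finset.sum_add_distrib, ← Finset.sum_mul, Finset.mul_sum]
          rfl
        have h2 : ∑ i, ∑ j, W i j * (y j)^2 = ∑ i, deg W i * (y i)^2 := by
          rw [Finset.sum_comm]
          exact Finset.sum_congr rfl fun j _ => by rw [← Finset.sum_mul, hdeg]
        simp only [h1, Finset.sum_sub_distrib, Finset.sum_add_distrib]
        rw [h2, ← Finset.mul_sum]
        ring

end helpers

section stage2
variable {N : ℕ}

lemma sum_subtype_eq {s : Finset (Fin N)} (f : Fin N → ℝ) (hf : ∀ i ∉ s, f i = 0) :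
    ∑ i : ↥s, f i.val = ∑ i, f i := by
  rw [Finset.sum_coe_sort s f]
  exact Finset.sum_subset (Finset.subset_univ s) fun i _ hi => hf i hi

lemma lap_isSymm (W : Matrix (Fin N) (Fin N) ℝ) (hsymm : W.IsSymm) : (lap W).IsSymm := by
  unfold lap
  exact (Matrix.isSymm_diagonal _).sub hsymm

lemma sub_posDef (W : Matrix (Fin N) (Fin N) ℝ) (hsymm : W.IsSymm)
    (hnonneg : ∀ i j, 0 ≤ W i j) (hconn : IsConn W) (V1 : Finset (Fin N))
    (h1 : V1.Nonempty) :
    ((lap W).submatrix (Subtype.val : ↥(V1ᶜ) → Fin N) Subtype.val).PosDef := by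
  classical
  refine posDef_iff_dotProduct_mulVec.mpr ⟨?_, ?_⟩
  · ext c d
    simp only [conjTranspose_apply, submatrix_apply, star_trivial]
    exact (lap_isSymm W hsymm).apply _ _
  · intro x hx
    set y : Fin N → ℝ := fun i => if h : i ∈ (V1ᶜ : Finset (Fin N)) then x ⟨i, h⟩ else 0 with hy
    have hy0 : ∀ i ∉ (V1ᶜ : Finset (Fin N)), y i = 0 := fun i hi => dif_neg hi
    have hyv : ∀ c : ↥(V1ᶜ : Finset (Fin N)), y c.val = x c := fun c => dif_pos c.2
    have inner : ∀ i : Fin N,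
        (lap W *ᵥ y) i = ∑ d : ↥(V1ᶜ : Finset (Fin N)), lap W i d.val * x d := by
      intro i
      show (∑ j, lap W i j * y j) = _
      rw [← sum_subtype_eq (fun j => lap W i j * y j)
        (fun j hj => by show lap W i j * y j = 0; rw [hy0 j hj, mul_zero])]
      exact Finset.sum_congr rfl fun d _ => by rw [hyv]
    have key : star x ⬝ᵥ (((lap W).submatrix (Subtype.val : ↥(V1ᶜ) → Fin N) Subtype.val) *ᵥ x)
        = y ⬝ᵥ (lap W *ᵥ y) := by
      have : y ⬝ᵥ (lap W *ᵥ y) = ∑ c : ↥(V1ᶜ : Finset (Fin N)), y c.val * (lap W *ᵥ y) c.val := by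
        rw [sum_subtype_eq (fun i => y i * (lap W *ᵥ y) i)
          (fun i hi => by show y i * (lap W *ᵥ y) i = 0; rw [hy0 i hi, zero_mul])]
        rfl
      rw [this]
      unfold dotProduct
      refine Finset.sum_congr rfl fun c _ => ?_
      rw [star_trivial, hyv, inner]
      congr 1
    rw [key]
    -- positivity
    have hnn : (0:ℝ) ≤ ∑ i, ∑ j, W i j * (y i - y j) ^ 2 :=
      Finset.sum_nonneg fun i _ => Finset.sum_nonneg fun j _ =>
        mul_nonneg (hnonneg i j) (sq_nonneg _)
    have hq := quad_eq W hsymm y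
    rcases lt_or_eq_of_le hnn with hpos | hzero
    · linarith [hq]
    · exfalso
      have hterm : ∀ i j : Fin N, W i j * (y i - y j) ^ 2 = 0 := by
        intro i j
        have h' := (Finset.sum_eq_zero_iff_of_nonneg
          (fun i (_ : i ∈ Finset.univ) => Finset.sum_nonneg fun j _ =>
            mul_nonneg (hnonneg i j) (sq_nonneg _))).mp hzero.symm i (Finset.mem_univ i)
        exact (Finset.sum_eq_zero_iff_of_nonneg
          (fun j (_ : j ∈ Finset.univ) => mul_nonneg (hnonneg i j) (sq_nonneg _))).mp
          h' j (Finset.mem_univ j)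
      have hstep : ∀ i j : Fin N, 0 < W i j → y i = y j := by
        intro i j hw
        have := hterm i j
        have h2 : (y i - y j) ^ 2 = 0 := by
          rcases mul_eq_zero.mp this with h | h
          · exact absurd h hw.ne'
          · exact h
        have := pow_eq_zero_iff (n := 2) (by norm_num) |>.mp h2
        linarith
      obtain ⟨a, ha⟩ := h1
      have hconst : ∀ j k : Fin N, Relation.ReflTransGen (fun a b => 0 < W a b) j k →
          y j = y k := by
        intro j k h
        induction h with
        | refl => rfl
        | tail _ hbc ih => exact ih.trans (hstep _ _ hbc)
      have hya : y a = 0 := hy0 a (by simp [Finset.mem_compl, ha])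
      apply hx
      funext c
      have : y c.val = 0 := (hconst c.val a (hconn c.val a)).trans hya
      rw [← hyv c, this]
      rfl

section stage3
variable {m : Type*} [Fintype m] [DecidableEq m]

lemma mulVec_inv_col (M : Matrix m m ℝ) (hu : IsUnit M.det) (d e : m) :
    (M *ᵥ (fun k => M⁻¹ k d)) e = if e = d then 1 else 0 := by
  have h : (M *ᵥ (fun k => M⁻¹ k d)) e = (M * M⁻¹) e d := by
    simp [mulVec, dotProduct, Matrix.mul_apply]
  rw [h, Matrix.mul_nonsing_inv M hu, Matrix.one_apply]

lemma inv_entry_nonneg (M : Matrix m m ℝ) (hpd : M.PosDef)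
    (hoff : ∀ i j : m, i ≠ j → M i j ≤ 0) (c d : m) :
    0 ≤ M⁻¹ c d := by
  classical
  set x : m → ℝ := fun e => M⁻¹ e d with hxdef
  set z : m → ℝ := fun e => min (x e) 0 with hzdef
  have hz_nonpos : ∀ e, z e ≤ 0 := fun e => min_le_right _ _
  have hxz : ∀ e, 0 ≤ x e - z e := fun e => sub_nonneg.mpr (min_le_left _ _)
  have hz_cases : ∀ e, z e = 0 ∨ z e = x e := by
    intro e
    rcases le_or_gt 0 (x e) with h | h
    · exact Or.inl (min_eq_right h)
    · exact Or.inr (min_eq_left h.le)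
  have hu : IsUnit M.det := (Matrix.isUnit_iff_isUnit_det M).mp hpd.isUnit
  have h1 : z ⬝ᵥ (M *ᵥ x) = z d := by
    unfold dotProduct
    rw [Finset.sum_eq_single d]
    · rw [mulVec_inv_col M hu, if_pos rfl, mul_one]
    · intro b _ hb
      rw [mulVec_inv_col M hu, if_neg hb, mul_zero]
    · intro h; exact absurd (Finset.mem_univ d) h
  have h2 : 0 ≤ z ⬝ᵥ (M *ᵥ (x - z)) := by
    unfold dotProduct mulVec
    refine Finset.sum_nonneg fun i _ => ?_
    rcases hz_cases i with h0 | hxi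
    · rw [h0, zero_mul]
    · show 0 ≤ z i * ∑ j, M i j * (x - z) j
      rw [Finset.mul_sum]
      refine Finset.sum_nonneg fun j _ => ?_
      rcases eq_or_ne i j with rfl | hij
      · have : (x - z) i = 0 := by simp [Pi.sub_apply, hxi.symm]
        rw [this, mul_zero, mul_zero]
      · have hMij := hoff i j hij
        have : 0 ≤ z i * M i j := by nlinarith [hz_nonpos i, hMij]
        calc (0:ℝ) ≤ (z i * M i j) * (x - z) j := mul_nonneg this (hxz j)
          _ = z i * (M i j * (x - z) j) := by ring
  have h3 : 0 ≤ z ⬝ᵥ (M *ᵥ z) := by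
    have := hpd.posSemidef.dotProduct_mulVec_nonneg z
    simpa using this
  have decomp : z ⬝ᵥ (M *ᵥ x) = z ⬝ᵥ (M *ᵥ z) + z ⬝ᵥ (M *ᵥ (x - z)) := by
    have hx' : x = z + (x - z) := by
      funext e
      show x e = z e + (x e - z e)
      ring
    calc z ⬝ᵥ (M *ᵥ x) = z ⬝ᵥ (M *ᵥ (z + (x - z))) := by rw [← hx']
      _ = z ⬝ᵥ (M *ᵥ z + M *ᵥ (x - z)) := by rw [mulVec_add]
      _ = z ⬝ᵥ (M *ᵥ z) + z ⬝ᵥ (M *ᵥ (x - z)) := dotProduct_add _ _ _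
  have hzd : z d ≤ 0 := hz_nonpos d
  have hz0 : z ⬝ᵥ (M *ᵥ z) = 0 := le_antisymm (by linarith [h1, h2, decomp]) h3
  have hzz : z = 0 := by
    by_contra hne
    have := hpd.dotProduct_mulVec_pos hne
    rw [star_trivial] at this
    exact absurd hz0 (ne_of_gt this)
  have : min (x c) 0 = 0 := congrFun hzz c
  by_contra hneg
  push_neg at hneg
  rw [min_eq_left hneg.le] at this
  exact absurd this (ne_of_lt hneg)

end stage3

section stage4
variable {N : ℕ}

lemma inv_pos_of_path (W : Matrix (Fin N) (Fin N) ℝ) (hsymm : W.IsSymm)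
    (hnonneg : ∀ i j, 0 ≤ W i j) (hdiag : ∀ i, W i i = 0) (hconn : IsConn W)
    (V1 : Finset (Fin N)) (h1 : V1.Nonempty)
    {c d : ↥(V1ᶜ : Finset (Fin N))}
    (hcd : Relation.ReflTransGen
      (fun a b : ↥(V1ᶜ : Finset (Fin N)) => 0 < W a.val b.val) c d) :
    0 < ((lap W).submatrix (Subtype.val : ↥(V1ᶜ) → Fin N) Subtype.val)⁻¹ c d := by
  classical
  set M := (lap W).submatrix (Subtype.val : ↥(V1ᶜ) → Fin N) Subtype.val with hM
  have hpd := sub_posDef W hsymm hnonneg hconn V1 h1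
  have hoff : ∀ a b : ↥(V1ᶜ : Finset (Fin N)), a ≠ b → M a b ≤ 0 := by
    intro a b hab
    have hv : a.val ≠ b.val := fun h => hab (Subtype.ext h)
    show lap W a.val b.val ≤ 0
    rw [lap_apply_ne W hv]
    linarith [hnonneg a.val b.val]
  have hu : IsUnit M.det := (Matrix.isUnit_iff_isUnit_det M).mp hpd.isUnit
  set x : ↥(V1ᶜ : Finset (Fin N)) → ℝ := fun e => M⁻¹ e d with hx
  have hx_nonneg : ∀ e, 0 ≤ x e := fun e => inv_entry_nonneg M hpd hoff e d
  have hMx : ∀ e, (M *ᵥ x) e = if e = d then 1 else 0 := fun e => mulVec_inv_col M hu d e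
  have hxd : 0 < x d := by
    rcases lt_or_eq_of_le (hx_nonneg d) with h | h
    · exact h
    · exfalso
      have h1' : ∑ e, M d e * x e = 1 := by
        have := hMx d
        simpa [mulVec, dotProduct] using this
      have hle : ∑ e, M d e * x e ≤ 0 := by
        refine Finset.sum_nonpos fun e _ => ?_
        rcases eq_or_ne d e with rfl | hne
        · rw [← h, mul_zero]
        · exact mul_nonpos_of_nonpos_of_nonneg (hoff d e hne) (hx_nonneg e)
      linarith
  have hstep : ∀ a b : ↥(V1ᶜ : Finset (Fin N)), 0 < W a.val b.val → 0 < x b → 0 < x a := by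
    intro a b hW hb
    rcases eq_or_ne a d with rfl | had
    · exact hxd
    · have hab : a ≠ b := by
        intro h
        rw [h, hdiag b.val] at hW
        exact lt_irrefl 0 hW
      have h0 : ∑ e, M a e * x e = 0 := by
        have := hMx a
        simpa [mulVec, dotProduct, had] using this
      have hMab : -(M a b) = W a.val b.val := by
        show -(lap W a.val b.val) = _
        rw [lap_apply_ne W (fun h => hab (Subtype.ext h)), neg_neg]
      have key : W a.val b.val * x b ≤ ∑ e ∈ Finset.univ.erase a, (-(M a e)) * x e := by
        rw [← hMab]
        refine Finset.single_le_sum (f := fun e => (-(M a e)) * x e) ?_ ?_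
        · intro e he
          exact mul_nonneg (neg_nonneg.mpr (hoff a e (Ne.symm (Finset.ne_of_mem_erase he))))
            (hx_nonneg e)
        · exact Finset.mem_erase.mpr ⟨Ne.symm hab, Finset.mem_univ b⟩
      have h4 : M a a * x a + ∑ e ∈ Finset.univ.erase a, M a e * x e = 0 := by
        rw [Finset.add_sum_erase Finset.univ (fun e => M a e * x e) (Finset.mem_univ a)]
        exact h0
      have h5 : ∑ e ∈ Finset.univ.erase a, (-(M a e)) * x e
          = -∑ e ∈ Finset.univ.erase a, M a e * x e := by
        rw [← Finset.sum_neg_distrib]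
        exact Finset.sum_congr rfl fun e _ => by ring
      have hpos : 0 < M a a * x a := by
        have := mul_pos hW hb
        rw [h5] at key
        linarith
      rcases lt_or_eq_of_le (hx_nonneg a) with h | h
      · exact h
      · exfalso; rw [← h, mul_zero] at hpos; exact lt_irrefl 0 hpos
  show 0 < x c
  induction hcd using Relation.ReflTransGen.head_induction_on with
  | refl => exact hxd
  | head hedge _ ih => exact hstep _ _ hedge ih

end stage4

section stage5
variable {N : ℕ}

lemma wred_pos (W : Matrix (Fin N) (Fin N) ℝ) (hsymm : W.IsSymm)
    (hnonneg : ∀ i j, 0 ≤ W i j) (hdiag : ∀ i, W i i = 0) (hconn : IsConn W)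
    (V1 : Finset (Fin N)) (h1 : V1.Nonempty) {i j : ↥V1} (hij : i ≠ j)
    (h : 0 < W i.val j.val ∨ ∃ c d : ↥(V1ᶜ : Finset (Fin N)),
      0 < W i.val c.val ∧
      Relation.ReflTransGen (fun a b : ↥(V1ᶜ : Finset (Fin N)) => 0 < W a.val b.val) c d ∧
      0 < W d.val j.val) :
    0 < wred (kron (lap W) V1) i j := by
  classical
  set Binv := ((lap W).submatrix (Subtype.val : ↥(V1ᶜ) → Fin N) (Subtype.val : ↥(V1ᶜ) → Fin N))⁻¹ with hBinv
  have hpd := sub_posDef W hsymm hnonneg hconn V1 h1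
  have hoff : ∀ a b : ↥(V1ᶜ : Finset (Fin N)), a ≠ b →
      (lap W).submatrix (Subtype.val : ↥(V1ᶜ) → Fin N) Subtype.val a b ≤ 0 := by
    intro a b hab
    have hv : a.val ≠ b.val := fun hh => hab (Subtype.ext hh)
    show lap W a.val b.val ≤ 0
    rw [lap_apply_ne W hv]
    linarith [hnonneg a.val b.val]
  have hB_nonneg : ∀ c d : ↥(V1ᶜ : Finset (Fin N)), 0 ≤ Binv c d :=
    fun c d => inv_entry_nonneg _ hpd hoff c d
  have hne1 : ∀ (a : ↥V1) (c : ↥(V1ᶜ : Finset (Fin N))), a.val ≠ c.val := by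
    intro a c hh
    have hc := c.2
    rw [Finset.mem_compl, ← hh] at hc
    exact hc a.2
  have hneij : i.val ≠ j.val := fun hh => hij (Subtype.ext hh)
  have hkron : kron (lap W) V1 i j
      = lap W i.val j.val - ∑ d : ↥(V1ᶜ : Finset (Fin N)),
          (∑ c : ↥(V1ᶜ : Finset (Fin N)), lap W i.val c.val * Binv c d)
            * lap W d.val j.val := by
    simp [kron, Matrix.sub_apply, Matrix.mul_apply, Matrix.submatrix_apply, hBinv]
  have hS : ∀ d : ↥(V1ᶜ : Finset (Fin N)),
      (∑ c : ↥(V1ᶜ : Finset (Fin N)), lap W i.val c.val * Binv c d) * lap W d.val j.val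
      = ∑ c : ↥(V1ᶜ : Finset (Fin N)), W i.val c.val * Binv c d * W d.val j.val := by
    intro d
    rw [Finset.sum_mul]
    refine Finset.sum_congr rfl fun c _ => ?_
    rw [lap_apply_ne W (hne1 i c), lap_apply_ne W (Ne.symm (hne1 j d))]
    ring
  have hmain : wred (kron (lap W) V1) i j
      = W i.val j.val + ∑ d : ↥(V1ᶜ : Finset (Fin N)),
          ∑ c : ↥(V1ᶜ : Finset (Fin N)), W i.val c.val * Binv c d * W d.val j.val := by
    show (if i = j then 0 else -(kron (lap W) V1 i j)) = _
    rw [if_neg hij, hkron, lap_apply_ne W hneij]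
    rw [Finset.sum_congr rfl fun d _ => hS d]
    ring
  rw [hmain]
  have hterm_nonneg : ∀ d c : ↥(V1ᶜ : Finset (Fin N)),
      0 ≤ W i.val c.val * Binv c d * W d.val j.val := fun d c =>
    mul_nonneg (mul_nonneg (hnonneg _ _) (hB_nonneg c d)) (hnonneg _ _)
  have hsum_nonneg : (0:ℝ) ≤ ∑ d : ↥(V1ᶜ : Finset (Fin N)),
      ∑ c : ↥(V1ᶜ : Finset (Fin N)), W i.val c.val * Binv c d * W d.val j.val :=
    Finset.sum_nonneg fun d _ => Finset.sum_nonneg fun c _ => hterm_nonneg d c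
  rcases h with hW | ⟨c, d, hic, hpath, hdj⟩
  · linarith
  · have hBcd : 0 < Binv c d := inv_pos_of_path W hsymm hnonneg hdiag hconn V1 h1 hpath
    have hterm : 0 < W i.val c.val * Binv c d * W d.val j.val :=
      mul_pos (mul_pos hic hBcd) hdj
    have hinner : W i.val c.val * Binv c d * W d.val j.val
        ≤ ∑ c' : ↥(V1ᶜ : Finset (Fin N)), W i.val c'.val * Binv c' d * W d.val j.val :=
      Finset.single_le_sum (fun c' _ => hterm_nonneg d c') (Finset.mem_univ c)
    have houter : (∑ c' : ↥(V1ᶜ : Finset (Fin N)), W i.val c'.val * Binv c' d * W d.val j.val)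
        ≤ ∑ d' : ↥(V1ᶜ : Finset (Fin N)),
            ∑ c' : ↥(V1ᶜ : Finset (Fin N)), W i.val c'.val * Binv c' d' * W d'.val j.val :=
      Finset.single_le_sum
        (fun d' _ => Finset.sum_nonneg fun c' _ => hterm_nonneg d' c') (Finset.mem_univ d)
    linarith [hnonneg i.val j.val]

end stage5


/-- The Kron reduction of a connected weighted graph is connected: any two kept vertices
are joined by a path of edges with positive reduced weight. -/
theorem kron_reduction_connected
    {N : ℕ} (W : Matrix (Fin N) (Fin N) ℝ)
    (hsymm : W.IsSymm) (hnonneg : ∀ i j, 0 ≤ W i j) (hdiag : ∀ i, W i i = 0)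
    (hconn : IsConn W) (V1 : Finset (Fin N)) (hcard : 2 ≤ V1.card) (h2 : V1ᶜ.Nonempty) :
    IsConn (wred (kron (lap W) V1)) := by
  classical
  have h1 : V1.Nonempty := Finset.card_pos.mp (by omega)
  set R := fun a b : ↥V1 => 0 < wred (kron (lap W) V1) a b with hR
  set rC := fun u v : ↥(V1ᶜ : Finset (Fin N)) => 0 < W u.val v.val with hrC
  have edge : ∀ (i j : ↥V1),
      (0 < W i.val j.val ∨ ∃ c d : ↥(V1ᶜ : Finset (Fin N)),
        0 < W i.val c.val ∧ Relation.ReflTransGen rC c d ∧ 0 < W d.val j.val) →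
      Relation.ReflTransGen R i j := by
    intro i j h
    rcases eq_or_ne i j with rfl | hij
    · exact Relation.ReflTransGen.refl
    · exact Relation.ReflTransGen.single
        (wred_pos W hsymm hnonneg hdiag hconn V1 h1 hij h)
  have main : ∀ (b : Fin N) (hb : b ∈ V1) (a : Fin N),
      Relation.ReflTransGen (fun u v => 0 < W u v) a b →
      (∀ ha : a ∈ V1, Relation.ReflTransGen R ⟨a, ha⟩ ⟨b, hb⟩) ∧
      (∀ haC : a ∈ (V1ᶜ : Finset (Fin N)), ∃ (d : ↥(V1ᶜ : Finset (Fin N))) (jj : ↥V1),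
        Relation.ReflTransGen rC ⟨a, haC⟩ d ∧ 0 < W d.val jj.val ∧
        Relation.ReflTransGen R jj ⟨b, hb⟩) := by
    intro b hb a hpath
    induction hpath using Relation.ReflTransGen.head_induction_on with
    | refl =>
      refine ⟨fun ha => Relation.ReflTransGen.refl, fun haC => ?_⟩
      exact absurd hb (Finset.mem_compl.mp haC)
    | @head a a' hedge hpath' ih =>
      constructor
      · intro ha
        by_cases ha' : a' ∈ V1
        · exact Relation.ReflTransGen.trans
            (edge ⟨a, ha⟩ ⟨a', ha'⟩ (Or.inl hedge)) (ih.1 ha')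
        · have haC' : a' ∈ (V1ᶜ : Finset (Fin N)) := Finset.mem_compl.mpr ha'
          obtain ⟨d, jj, hpc, hdj, hred⟩ := ih.2 haC'
          rcases eq_or_ne (⟨a, ha⟩ : ↥V1) jj with heq | hne
          · rw [heq]; exact hred
          · exact Relation.ReflTransGen.trans
              (edge ⟨a, ha⟩ jj (Or.inr ⟨⟨a', haC'⟩, d, hedge, hpc, hdj⟩)) hred
      · intro haC
        by_cases ha' : a' ∈ V1
        · exact ⟨⟨a, haC⟩, ⟨a', ha'⟩, Relation.ReflTransGen.refl, hedge, ih.1 ha'⟩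
        · have haC' : a' ∈ (V1ᶜ : Finset (Fin N)) := Finset.mem_compl.mpr ha'
          obtain ⟨d, jj, hpc, hdj, hred⟩ := ih.2 haC'
          exact ⟨d, jj, Relation.ReflTransGen.head hedge hpc, hdj, hred⟩
  intro i j
  have := (main j.val j.2 i.val (hconn i.val j.val)).1 i.2
  simpa using this
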